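/- Let K ⊆ V be a nonempty cone, let J ∈ F̂(K), and let F be a face of J. Then F ∈ F̂(K); that is, F ⊆ co K and co(K ∩ F) = F. -/
import Mathlib


open RealInnerProductSpace

variable {V : Type*} [NormedAddCommGroup V] [InnerProductSpace ℝ V]

/-- A (not necessarily convex or closed) cone: closed under nonnegative scaling. -/
def IsCone (C : Set V) : Prop := ∀ X ∈ C, ∀ l : ℝ, 0 ≤ l → l • X ∈ C

/-- `F̂(K)`: the family of all convex cones `J ⊆ co K` with `co (K ∩ J) = J`. -/
def Fhat (K : Set V) : Set (Set V) :=
  {J | Convex ℝ J ∧ IsCone J ∧ J ⊆ convexHull ℝ K ∧ convexHull ℝ (K ∩ J) = J}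

/-- `F` is a face of the convex cone `C`: `F` is a convex cone contained in `C`, and
whenever a finite sum of elements of `C` lies in `F`, each summand lies in `F`. -/
def IsFace (C F : Set V) : Prop :=
  F ⊆ C ∧ Convex ℝ F ∧ IsCone F ∧
    ∀ (m : ℕ) (X : Fin m → V), (∀ k, X k ∈ C) → (∑ k, X k) ∈ F → ∀ k, X k ∈ F

/-- Theorem 3.1 (i): every face `F` of `J ∈ F̂(K)` belongs to `F̂(K)`. -/
theorem stmt_8 [FiniteDimensional ℝ V] (K J F : Set V)
    (hKne : K.Nonempty) (hKcone : IsCone K)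
    (hJ : J ∈ Fhat K) (hF : IsFace J F) :
    F ∈ Fhat K := by
  obtain ⟨hJconv, hJcone, hJsub, hJeq⟩ := hJ
  obtain ⟨hFJ, hFconv, hFcone, hface⟩ := hF
  refine ⟨hFconv, hFcone, hFJ.trans hJsub, Set.Subset.antisymm
    (convexHull_min Set.inter_subset_right hFconv) ?_⟩
  intro x hx
  have hxJ : x ∈ convexHull ℝ (K ∩ J) := by rw [hJeq]; exact hFJ hx
  rw [convexHull_eq] at hxJ
  obtain ⟨ι, t, w, z, hw, hw1, hz, hcm⟩ := hxJ
  have hsum : ∑ i ∈ t, w i • z i = x := by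
    rw [← hcm, Finset.centerMass, hw1]; simp
  set e : Fin t.card ≃ t := t.equivFin.symm with he
  have key : ∀ i ∈ t, w i • z i ∈ F := by
    intro i hi
    have hmem : ∀ k : Fin t.card, w (e k : ι) • z (e k : ι) ∈ J := by
      intro k
      exact hJcone _ (hz _ (e k).2).2 _ (hw _ (e k).2)
    have hsF : (∑ k : Fin t.card, w (e k : ι) • z (e k : ι)) ∈ F := by
      have : ∑ k : Fin t.card, w (e k : ι) • z (e k : ι)
          = ∑ a : t, w (a : ι) • z (a : ι) := Equiv.sum_comp e (fun a : t => w (a : ι) • z (a : ι))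
      rw [this, Finset.sum_coe_sort t (fun i => w i • z i), hsum]
      exact hx
    have := hface t.card (fun k => w (e k : ι) • z (e k : ι)) hmem hsF
      (e.symm ⟨i, hi⟩)
    simpa using this
  have hzF : ∀ i ∈ t, w i ≠ 0 → z i ∈ F := by
    intro i hi hwi
    have hwpos : 0 < w i := lt_of_le_of_ne (hw i hi) (Ne.symm hwi)
    have := hFcone _ (key i hi) (w i)⁻¹ (le_of_lt (inv_pos.2 hwpos))
    rwa [smul_smul, inv_mul_cancel₀ hwi, one_smul] at this
  set t' := t.filter (fun i => w i ≠ 0) with ht'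
  have hcm' : t'.centerMass w z = x := by
    rw [ht', Finset.centerMass_filter_ne_zero, hcm]
  rw [← hcm']
  exact Finset.centerMass_mem_convexHull t'
    (fun i hi => hw i (Finset.mem_filter.1 hi).1)
    (by
      rw [ht', Finset.sum_filter_ne_zero, hw1]; exact one_pos)
    (fun i hi => by
      obtain ⟨hit, hwi⟩ := Finset.mem_filter.1 hi
      exact ⟨(hz i hit).1, hzF i hit hwi⟩)
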